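/- arXiv:2503.04578 — 4 statements merged into one kernel-verified Lean document; each statement's English description precedes it below -/
import Mathlib

section
/- Let $G$ be a group with a finite subset $S \subseteq G$ containing the identity $e$, let $\pi : G \to U(\mathcal{H})$ be a unitary representation, and suppose there exists $\varepsilon > 0$ such that for every $\xi$ orthogonal to the $G$-fixed vectors there exists $s_0 \in S$ with $\|\pi(s_0)\xi - \xi\| \ge \varepsilon\|\xi\|$. Then there exists $\delta > 0$, depending only on $\varepsilon$, such that for every $\xi$ orthogonal to the $G$-fixed vectors, $\left\| \sum_{s \in S} \pi(s)\xi \right\| \le (|S| - \delta)\|\xi\|$. -/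
open scoped InnerProductSpace

/-- if `S ∋ e` is a finite subset of `G`, `π` a unitary
representation of `G` and `ε > 0` is such that every vector `ξ` orthogonal to
the `G`-fixed vectors satisfies `‖π(s)ξ - ξ‖ ≥ ε‖ξ‖` for some `s ∈ S`, then
there is `δ > 0` depending only on `ε` with
`‖∑_{s∈S} π(s)ξ‖ ≤ (|S| - δ)‖ξ‖` for all such `ξ`. -/
theorem stmt2 (ε : ℝ) (hε : 0 < ε) :
    ∃ δ : ℝ, 0 < δ ∧
      ∀ (H : Type) [NormedAddCommGroup H] [InnerProductSpace ℂ H] [CompleteSpace H]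
        (G : Type) [Group G] (S : Finset G),
        (1 : G) ∈ S →
        ∀ (π : G →* (H ≃ₗᵢ[ℂ] H)),
        (∀ ξ : H, (∀ v : H, (∀ g : G, π g v = v) → ⟪ξ, v⟫_ℂ = 0) →
            ∃ s ∈ S, ε * ‖ξ‖ ≤ ‖π s ξ - ξ‖) →
        ∀ ξ : H, (∀ v : H, (∀ g : G, π g v = v) → ⟪ξ, v⟫_ℂ = 0) →
          ‖∑ s ∈ S, π s ξ‖ ≤ ((S.card : ℝ) - δ) * ‖ξ‖ := by
  set ε' := min ε 2 with hε'def
  have hε'0 : 0 < ε' := lt_min hε two_pos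
  have hε'2 : ε' ≤ 2 := min_le_right _ _
  refine ⟨ε' ^ 2 / 4, by positivity, ?_⟩
  intro H _ _ _ G _ S h1S π hyp ξ hξ
  classical
  by_cases hξ0 : ξ = 0
  · simp [hξ0]
  have hξpos : 0 < ‖ξ‖ := norm_pos_iff.mpr hξ0
  obtain ⟨s₀, hs₀S, hs₀⟩ := hyp ξ hξ
  have hnorm : ∀ s : G, ‖π s ξ‖ = ‖ξ‖ := fun s => (π s).norm_map ξ
  have hπ1 : π 1 ξ = ξ := by simp [map_one]
  have hs₀1 : s₀ ≠ 1 := by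
    intro h
    rw [h, hπ1, sub_self, norm_zero] at hs₀
    nlinarith
  have hε'le : ε' * ‖ξ‖ ≤ ‖π s₀ ξ - ξ‖ := by
    refine le_trans ?_ hs₀
    have : ε' ≤ ε := min_le_left _ _
    nlinarith
  have key : ‖π s₀ ξ + ξ‖ ≤ (2 - ε' ^ 2 / 4) * ‖ξ‖ := by
    have hpar := parallelogram_law_with_norm ℂ (π s₀ ξ) ξ
    rw [hnorm s₀] at hpar
    nlinarith [norm_nonneg (π s₀ ξ + ξ), norm_nonneg (π s₀ ξ - ξ),
      mul_le_mul hε'le hε'le (by positivity) (norm_nonneg _),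
      sq_nonneg (ε' * ‖ξ‖), sq_nonneg (‖π s₀ ξ + ξ‖ - (2 - ε' ^ 2 / 4) * ‖ξ‖),
      mul_pos hξpos hξpos, sq_nonneg (ε' ^ 2 * ‖ξ‖)]
  have h1mem : (1 : G) ∈ S.erase s₀ := Finset.mem_erase.mpr ⟨fun h => hs₀1 h.symm, h1S⟩
  have hsum : ∑ s ∈ S, π s ξ
      = (π s₀ ξ + π 1 ξ) + ∑ s ∈ (S.erase s₀).erase 1, π s ξ := by
    rw [← Finset.add_sum_erase _ _ hs₀S, ← Finset.add_sum_erase _ _ h1mem, add_assoc]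
  have hcard : (((S.erase s₀).erase 1).card : ℝ) = (S.card : ℝ) - 2 := by
    rw [Finset.card_erase_of_mem h1mem, Finset.card_erase_of_mem hs₀S]
    have h2 : 2 ≤ S.card := Finset.one_lt_card.mpr ⟨s₀, hs₀S, 1, h1S, hs₀1⟩
    have h3 : S.card - 1 - 1 = S.card - 2 := by omega
    rw [h3, Nat.cast_sub h2]
    norm_num
  calc ‖∑ s ∈ S, π s ξ‖ ≤ ‖π s₀ ξ + π 1 ξ‖ + ‖∑ s ∈ (S.erase s₀).erase 1, π s ξ‖ := by
        rw [hsum]; exact norm_add_le _ _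
    _ ≤ (2 - ε' ^ 2 / 4) * ‖ξ‖ + ((S.card : ℝ) - 2) * ‖ξ‖ := by
        gcongr
        · rw [hπ1]; exact key
        · calc ‖∑ s ∈ (S.erase s₀).erase 1, π s ξ‖
              ≤ ∑ s ∈ (S.erase s₀).erase 1, ‖π s ξ‖ := norm_sum_le _ _
            _ = (((S.erase s₀).erase 1).card : ℝ) * ‖ξ‖ := by
                simp [hnorm, Finset.sum_const, nsmul_eq_mul]
            _ = ((S.card : ℝ) - 2) * ‖ξ‖ := by rw [hcard]
    _ = ((S.card : ℝ) - ε' ^ 2 / 4) * ‖ξ‖ := by ring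
end

section
/- Let $(\mathcal{H}_n)_{n \in \mathbb{N}}$ be a sequence of Hilbert spaces and $T_n \in B(\mathcal{H}_n)$ self-adjoint operators, and set $T = (T_n)_n \in B(\bigoplus_n \mathcal{H}_n)$ (assuming $\sup_n \|T_n\| < \infty$). Suppose $\delta \in \mathbb{R}$ is such that $T - \delta$ is invertible modulo the closure of the ideal $\bigoplus_n B(\mathcal{H}_n)$ (the operators with only finitely many nonzero components). Then there is a sequence $S_n \in B(\mathcal{H}_n)$ with $\sup_n \|S_n\| < \infty$ and $(T_n - \delta) S_n = 1_{\mathcal{H}_n}$ for all but finitely many $n$. -/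
/-- block-diagonal picture of `B(⊕ₙ Hₙ)`. The direct sum is
encoded by a family of pairwise-orthogonal self-adjoint projections `P n`
summing strongly to the identity; `T` is a uniformly bounded self-adjoint
block-diagonal operator (it commutes with each `P n`). If `T - δ` is
invertible modulo the norm closure of the ideal of operators supported on
finitely many blocks, then there is a uniformly bounded family of block
operators `Sf n` with `(T - δ) (Sf n) = 1_{Hₙ} (= P n)` for all but finitely
many `n`. -/
theorem stmt10 {H : Type*} [NormedAddCommGroup H] [InnerProductSpace ℂ H]
    [CompleteSpace H]
    (P : ℕ → H →L[ℂ] H)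
    (hproj : ∀ n, IsIdempotentElem (P n) ∧ IsSelfAdjoint (P n))
    (horth : ∀ m n, m ≠ n → P m * P n = 0)
    (hsum : ∀ x : H, HasSum (fun n => P n x) x)
    (T : H →L[ℂ] H) (hTsa : IsSelfAdjoint T)
    (hTblock : ∀ n, T * P n = P n * T)
    (δ : ℝ)
    (hinv : ∃ S' : H →L[ℂ] H,
      ((T - (δ : ℂ) • 1) * S' - 1) ∈
          closure {A : H →L[ℂ] H | ∃ F : Finset ℕ,
            A = (∑ n ∈ F, P n) * A * (∑ n ∈ F, P n)} ∧
        (S' * (T - (δ : ℂ) • 1) - 1) ∈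
          closure {A : H →L[ℂ] H | ∃ F : Finset ℕ,
            A = (∑ n ∈ F, P n) * A * (∑ n ∈ F, P n)}) :
    ∃ (Sf : ℕ → H →L[ℂ] H) (C : ℝ),
      (∀ n, ‖Sf n‖ ≤ C) ∧
        (∀ n, Sf n = P n * Sf n * P n) ∧
        ∃ F : Finset ℕ, ∀ n ∉ F, (T - (δ : ℂ) • 1) * Sf n = P n := by
  obtain ⟨S', hS'r, -⟩ := hinv
  set Tδ : H →L[ℂ] H := T - (δ : ℂ) • 1 with hTδ
  set X : H →L[ℂ] H := Tδ * S' - 1 with hX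
  rw [Metric.mem_closure_iff] at hS'r
  obtain ⟨A, ⟨F, hA⟩, hAX⟩ := hS'r (1/2) (by norm_num)
  rw [dist_eq_norm] at hAX
  -- projections have norm at most 1
  have hPnorm : ∀ n, ‖P n‖ ≤ 1 := by
    intro n
    have h1 : ‖P n‖ * ‖P n‖ = ‖P n‖ := by
      calc ‖P n‖ * ‖P n‖ = ‖star (P n) * P n‖ := (CStarRing.norm_star_mul_self).symm
        _ = ‖P n * P n‖ := by rw [(hproj n).2]
        _ = ‖P n‖ := by rw [(hproj n).1]
    nlinarith [norm_nonneg (P n)]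
  -- P n commutes with Tδ
  have hcomm : ∀ n, P n * Tδ = Tδ * P n := by
    intro n
    have : P n * ((δ : ℂ) • 1) = ((δ : ℂ) • 1) * P n := by
      simp [mul_smul_comm, smul_mul_assoc]
    simp only [hTδ, mul_sub, sub_mul, hTblock n, this]
  -- P n kills A for n ∉ F
  have hPA : ∀ n ∉ F, P n * A = 0 := by
    intro n hn
    have hPQ : P n * (∑ m ∈ F, P m) = 0 := by
      rw [Finset.mul_sum]
      refine Finset.sum_eq_zero fun m hm => horth n m ?_
      rintro rfl; exact hn hm
    rw [hA, ← mul_assoc, ← mul_assoc, hPQ, zero_mul, zero_mul]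
  -- set up the corner defect
  set D : ℕ → H →L[ℂ] H := fun n => P n * (X - A) * P n with hD
  have hDdef : ∀ m, D m = P m * (X - A) * P m := fun m => rfl
  have hDnorm : ∀ n, ‖D n‖ < 1 / 2 := by
    intro n
    have h1 : ‖D n‖ ≤ ‖X - A‖ := by
      rw [hDdef]
      calc ‖P n * (X - A) * P n‖ ≤ ‖P n * (X - A)‖ * ‖P n‖ := norm_mul_le _ _
        _ ≤ (‖P n‖ * ‖X - A‖) * ‖P n‖ :=
          mul_le_mul_of_nonneg_right (norm_mul_le _ _) (norm_nonneg _)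
        _ ≤ (1 * ‖X - A‖) * 1 := by gcongr <;> exact hPnorm n
        _ = ‖X - A‖ := by ring
    linarith
  have hPD : ∀ n, P n * D n = D n ∧ D n * P n = D n := by
    intro n
    have hpp := (hproj n).1
    constructor
    · rw [hDdef, ← mul_assoc, ← mul_assoc, hpp]
    · rw [hDdef, mul_assoc, hpp]
  -- key algebraic identity
  have hkey : ∀ n ∉ F, Tδ * (P n * S' * P n) = P n + D n := by
    intro n hn
    have hpp := (hproj n).1
    have hc := hcomm n
    have h1 : D n = P n * X * P n := by
      rw [hDdef, mul_sub, sub_mul, hPA n hn, zero_mul, sub_zero]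
    have h2 : P n * X * P n = Tδ * (P n * S' * P n) - P n := by
      rw [hX, mul_sub, mul_one, sub_mul, hpp, ← mul_assoc, hc]
      simp only [mul_assoc]
    rw [h1, h2]; abel
  -- construct the blocks by choice
  have hex : ∀ n, ∃ s : H →L[ℂ] H, ‖s‖ ≤ 2 * ‖S'‖ ∧ s = P n * s * P n ∧
      (n ∉ F → Tδ * s = P n) := by
    intro n
    by_cases hn : n ∈ F
    · exact ⟨0, by simp only [norm_zero]; positivity, by simp, fun h => absurd hn h⟩
    · have hpp := (hproj n).1
      have hu1 : ‖-D n‖ < 1 := by rw [norm_neg]; linarith [hDnorm n]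
      set u : (H →L[ℂ] H)ˣ := Units.oneSub (-D n) hu1 with hudef
      have huval : (u : H →L[ℂ] H) = 1 + D n := by
        rw [hudef, Units.val_oneSub, sub_neg_eq_add]
      set v : H →L[ℂ] H := ↑u⁻¹ with hvdef
      have huv : (1 + D n) * v = 1 := by rw [← huval, hvdef, Units.mul_inv]
      have hvu : v * (1 + D n) = 1 := by rw [← huval, hvdef, Units.inv_mul]
      -- norm bound on v
      have hvnorm : ‖v‖ ≤ 2 := by
        have h0 := hvu
        rw [mul_add, mul_one] at h0
        have h1 : v = 1 - v * D n := eq_sub_of_add_eq h0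
        have hnorm1 : ‖(1 : H →L[ℂ] H)‖ ≤ 1 := by
          rw [ContinuousLinearMap.one_def]; exact ContinuousLinearMap.norm_id_le
        have hm := norm_mul_le v (D n)
        have hd : ‖v‖ * ‖D n‖ ≤ ‖v‖ * (1/2) :=
          mul_le_mul_of_nonneg_left (hDnorm n).le (norm_nonneg v)
        have h2 : ‖v‖ ≤ 1 + ‖v‖ * (1/2) := by
          calc ‖v‖ = ‖1 - v * D n‖ := by rw [← h1]
            _ ≤ ‖(1 : H →L[ℂ] H)‖ + ‖v * D n‖ := norm_sub_le _ _
            _ ≤ 1 + ‖v‖ * (1/2) := by linarith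
        linarith
      -- v commutes with P n
      have hPu : P n * (1 + D n) = (1 + D n) * P n := by
        rw [mul_add, add_mul, mul_one, one_mul, (hPD n).1, (hPD n).2]
      have e1 : v * ((1 + D n) * (P n * v)) = P n * v := by
        rw [← mul_assoc, hvu, one_mul]
      have e2 : (1 + D n) * (P n * v) = P n := by
        rw [← mul_assoc, ← hPu, mul_assoc, huv, mul_one]
      have hPv : P n * v = v * P n := by rw [← e1, e2]
      have hBnorm : ‖P n * S' * P n‖ ≤ ‖S'‖ := by
        calc ‖P n * S' * P n‖ ≤ ‖P n * S'‖ * ‖P n‖ := norm_mul_le _ _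
          _ ≤ (‖P n‖ * ‖S'‖) * ‖P n‖ :=
            mul_le_mul_of_nonneg_right (norm_mul_le _ _) (norm_nonneg _)
          _ ≤ (1 * ‖S'‖) * 1 := by gcongr <;> exact hPnorm n
          _ = ‖S'‖ := by ring
      have hPB : P n * (P n * S' * P n) = P n * S' * P n := by
        rw [← mul_assoc, ← mul_assoc, hpp]
      have hBP : (P n * S' * P n) * P n = P n * S' * P n := by
        rw [mul_assoc, hpp]
      refine ⟨(P n * S' * P n) * v, ?_, ?_, fun _ => ?_⟩
      · calc ‖(P n * S' * P n) * v‖ ≤ ‖P n * S' * P n‖ * ‖v‖ := norm_mul_le _ _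
          _ ≤ ‖S'‖ * 2 := mul_le_mul hBnorm hvnorm (norm_nonneg v) (norm_nonneg S')
          _ = 2 * ‖S'‖ := by ring
      · have : P n * ((P n * S' * P n) * v) * P n = (P n * S' * P n) * v := by
          rw [← mul_assoc, hPB, mul_assoc, ← hPv, ← mul_assoc, hBP]
        exact this.symm
      · have hsplit : P n + D n = P n * (1 + D n) := by
          rw [mul_add, mul_one, (hPD n).1]
        calc Tδ * ((P n * S' * P n) * v) = (Tδ * (P n * S' * P n)) * v :=
              (mul_assoc _ _ _).symm
          _ = (P n + D n) * v := by rw [hkey n hn]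
          _ = (P n * (1 + D n)) * v := by rw [hsplit]
          _ = P n := by rw [mul_assoc, huv, mul_one]
  choose Sf hSf1 hSf2 hSf3 using hex
  exact ⟨Sf, 2 * ‖S'‖, hSf1, hSf2, F, hSf3⟩
end

section
/- With the hypotheses above, suppose additionally that there is a sequence $(n_k, j_k)$ and real numbers $\sigma_{n_k} \in \sigma(T_{n_k})$ with $\sigma_{n_k} \to \delta$ and $\sigma_{n_k} \ne \delta$ infinitely often, with $n_k \to \infty$. Then $T - \delta$ is not invertible modulo the closed ideal $\overline{\bigoplus_n B(\mathcal{H}_n)}$; equivalently, $\delta$ lies in the spectrum of the image of $T$ in the Calkin-type quotient $B(\bigoplus \mathcal{H}_n)/\overline{\bigoplus B(\mathcal{H}_n)}$. -/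
/-- In a complete normed ring, an element with approximate left and right
inverses (error `< 1`) is a unit. -/
private lemma stmt11_isUnit_of_both {R : Type*} [NormedRing R] [CompleteSpace R]
    {a b : R} (h1 : ‖a * b - 1‖ < 1) (h2 : ‖b * a - 1‖ < 1) :
    ∃ c : R, a * c = 1 ∧ c * a = 1 := by
  have u1 : IsUnit (a * b) := by
    have h : ‖1 - a * b‖ < 1 := by rwa [norm_sub_rev]
    simpa using (Units.oneSub (1 - a * b) h).isUnit
  have u2 : IsUnit (b * a) := by
    have h : ‖1 - b * a‖ < 1 := by rwa [norm_sub_rev]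
    simpa using (Units.oneSub (1 - b * a) h).isUnit
  obtain ⟨c, hc⟩ := u1.exists_right_inv
  obtain ⟨d, hd⟩ := u2.exists_left_inv
  have hr : a * (b * c) = 1 := by rw [← mul_assoc, hc]
  have hl : (d * b) * a = 1 := by rw [mul_assoc, hd]
  have heq : d * b = b * c := by
    calc d * b = (d * b) * (a * (b * c)) := by rw [hr, mul_one]
      _ = ((d * b) * a) * (b * c) := (mul_assoc (d * b) a (b * c)).symm
      _ = b * c := by rw [hl, one_mul]
  exact ⟨b * c, hr, by rw [← heq, hl]⟩

private lemma stmt11_corner_mul_right {R : Type*} [Ring R] (Q X Z : R)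
    (hQQ : Q * Q = Q) (hXQ : X * Q = X) (hQZ : Q * Z = Z) :
    (X + (1 - Q)) * (Z + (1 - Q)) = X * Z + (1 - Q) := by
  have h1 : X * (1 - Q) = 0 := by rw [mul_sub, mul_one, hXQ, sub_self]
  have h2 : (1 - Q) * Z = 0 := by rw [sub_mul, one_mul, hQZ, sub_self]
  have h3 : (1 - Q) * (1 - Q) = 1 - Q := by
    have : IsIdempotentElem Q := hQQ
    exact this.one_sub.eq
  rw [add_mul, mul_add, mul_add, h1, h2, h3, add_zero, zero_add]

private lemma stmt11_corner_mul_left {R : Type*} [Ring R] (Q X Z : R)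
    (hQQ : Q * Q = Q) (hQX : Q * X = X) (hZQ : Z * Q = Z) :
    (Z + (1 - Q)) * (X + (1 - Q)) = Z * X + (1 - Q) := by
  have h1 : Z * (1 - Q) = 0 := by rw [mul_sub, mul_one, hZQ, sub_self]
  have h2 : (1 - Q) * X = 0 := by rw [sub_mul, one_mul, hQX, sub_self]
  have h3 : (1 - Q) * (1 - Q) = 1 - Q := by
    have : IsIdempotentElem Q := hQQ
    exact this.one_sub.eq
  rw [add_mul, mul_add, mul_add, h2, h1, h3, add_zero, zero_add]

private lemma stmt11_aux_left {R : Type*} [Ring R] (Q X : R)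
    (hQQ : Q * Q = Q) (hQX : Q * X = X) : Q * (X + (1 - Q)) = X := by
  rw [mul_add, mul_sub, mul_one, hQQ, hQX, sub_self, add_zero]

private lemma stmt11_aux_right {R : Type*} [Ring R] (Q X : R)
    (hQQ : Q * Q = Q) (hXQ : X * Q = X) : (X + (1 - Q)) * Q = X := by
  rw [add_mul, sub_mul, one_mul, hQQ, hXQ, sub_self, add_zero]

private lemma stmt11_corner_inv {R : Type*} [NormedRing R] [CompleteSpace R]
    (Q X S0 : R) (hQQ : Q * Q = Q) (hXQ : X * Q = X) (hQX : Q * X = X)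
    (hQS0 : Q * S0 = S0) (hS0Q : S0 * Q = S0)
    (h1 : ‖X * S0 - Q‖ < 1) (h2 : ‖S0 * X - Q‖ < 1) :
    ∃ S : R, Q * S = S ∧ S * Q = S ∧ X * S = Q ∧ S * X = Q := by
  set A : R := X + (1 - Q) with hA_def
  set B : R := S0 + (1 - Q) with hB_def
  have eAB : A * B = X * S0 + (1 - Q) := stmt11_corner_mul_right Q X S0 hQQ hXQ hQS0
  have eBA : B * A = S0 * X + (1 - Q) := stmt11_corner_mul_left Q X S0 hQQ hQX hS0Q
  have hA1 : ‖A * B - 1‖ < 1 := by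
    rw [eAB, show X * S0 + (1 - Q) - 1 = X * S0 - Q from by abel]; exact h1
  have hB1 : ‖B * A - 1‖ < 1 := by
    rw [eBA, show S0 * X + (1 - Q) - 1 = S0 * X - Q from by abel]; exact h2
  obtain ⟨Ai, hAAi, hAiA⟩ := stmt11_isUnit_of_both hA1 hB1
  have hQA : Q * A = X := stmt11_aux_left Q X hQQ hQX
  have hAQ : A * Q = X := stmt11_aux_right Q X hQQ hXQ
  have hAiQ : Ai * Q = Q * Ai := by
    calc Ai * Q = Ai * Q * (A * Ai) := by rw [hAAi, mul_one]
      _ = Ai * (Q * A) * Ai := by noncomm_ring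
      _ = Ai * (A * Q) * Ai := by rw [hQA, hAQ]
      _ = (Ai * A) * (Q * Ai) := by noncomm_ring
      _ = Q * Ai := by rw [hAiA, one_mul]
  refine ⟨Q * Ai * Q, ?_, ?_, ?_, ?_⟩
  · rw [← mul_assoc, ← mul_assoc, hQQ]
  · rw [mul_assoc, hQQ]
  · calc X * (Q * Ai * Q) = (X * Q) * Ai * Q := by noncomm_ring
      _ = (A * Q) * Ai * Q := by rw [hXQ, ← hAQ]
      _ = A * (Q * Ai) * Q := by noncomm_ring
      _ = A * (Ai * Q) * Q := by rw [hAiQ]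
      _ = (A * Ai) * (Q * Q) := by noncomm_ring
      _ = Q := by rw [hAAi, hQQ, one_mul]
  · calc (Q * Ai * Q) * X = Q * Ai * (Q * X) := by noncomm_ring
      _ = Q * Ai * (A * Q) := by rw [hQX, ← hAQ]
      _ = Q * (Ai * A) * Q := by noncomm_ring
      _ = Q := by rw [hAiA, mul_one, hQQ]

/-- with the block-diagonal setup of Statement 10 (projections
`P n`, self-adjoint block-diagonal `T`), suppose there are indices `n k → ∞`
and reals `σ k` in the spectrum of the block `T_{n k}` (i.e. `T - σ k` is not
invertible on the range of `P (n k)`), with `σ k → δ` and `σ k ≠ δ` infinitely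
often. Then `T - δ` is not invertible modulo the norm closure of the ideal of
operators supported on finitely many blocks; equivalently `δ` is in the
spectrum of the image of `T` in the Calkin-type quotient. -/
theorem stmt11 {H : Type*} [NormedAddCommGroup H] [InnerProductSpace ℂ H]
    [CompleteSpace H]
    (P : ℕ → H →L[ℂ] H)
    (hproj : ∀ n, IsIdempotentElem (P n) ∧ IsSelfAdjoint (P n))
    (horth : ∀ m n, m ≠ n → P m * P n = 0)
    (hsum : ∀ x : H, HasSum (fun n => P n x) x)
    (T : H →L[ℂ] H) (hTsa : IsSelfAdjoint T)
    (hTblock : ∀ n, T * P n = P n * T)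
    (δ : ℝ)
    (n : ℕ → ℕ) (hn : StrictMono n)
    (σ : ℕ → ℝ)
    (hσspec : ∀ k, ¬ ∃ S : H →L[ℂ] H,
      S = P (n k) * S * P (n k) ∧
        (T - (σ k : ℂ) • 1) * S = P (n k) ∧ S * (T - (σ k : ℂ) • 1) = P (n k))
    (hσlim : Filter.Tendsto σ Filter.atTop (nhds δ))
    (hσne : ∀ K : ℕ, ∃ k ≥ K, σ k ≠ δ) :
    ¬ ∃ S' : H →L[ℂ] H,
      ((T - (δ : ℂ) • 1) * S' - 1) ∈
          closure {A : H →L[ℂ] H | ∃ F : Finset ℕ,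
            A = (∑ m ∈ F, P m) * A * (∑ m ∈ F, P m)} ∧
        (S' * (T - (δ : ℂ) • 1) - 1) ∈
          closure {A : H →L[ℂ] H | ∃ F : Finset ℕ,
            A = (∑ m ∈ F, P m) * A * (∑ m ∈ F, P m)} := by
  rintro ⟨S', hR, hL⟩
  set Td : H →L[ℂ] H := T - (δ : ℂ) • 1 with hTd_def
  set R : H →L[ℂ] H := Td * S' - 1 with hR_def
  set L : H →L[ℂ] H := S' * Td - 1 with hL_def
  clear_value Td R L
  -- approximate R and L by finitely supported operators
  obtain ⟨AR, hARmem, hARd⟩ := Metric.mem_closure_iff.mp hR (1/4) (by norm_num)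
  obtain ⟨AL, hALmem, hALd⟩ := Metric.mem_closure_iff.mp hL (1/4) (by norm_num)
  obtain ⟨FR, hARe⟩ := hARmem
  obtain ⟨FL, hALe⟩ := hALmem
  rw [dist_eq_norm] at hARd hALd
  -- choose k large
  have hεpos : (0:ℝ) < 1 / (4 * (‖S'‖ + 1)) := by positivity
  obtain ⟨K, hK⟩ := (Metric.tendsto_atTop.mp hσlim _ hεpos)
  set M : ℕ := (FR ∪ FL).sup id with hM_def
  set k : ℕ := max K (M + 1) with hk_def
  have hkK : K ≤ k := le_max_left _ _
  have hσk : |σ k - δ| < 1 / (4 * (‖S'‖ + 1)) := by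
    have := hK k hkK
    rwa [Real.dist_eq] at this
  have hnk_big : ∀ m ∈ FR ∪ FL, m ≠ n k := by
    intro m hm
    have h1 : m ≤ M := Finset.le_sup (f := id) hm
    have h2 : M + 1 ≤ k := le_max_right _ _
    have h3 : k ≤ n k := hn.le_apply
    omega
  set Q : H →L[ℂ] H := P (n k) with hQ_def
  have hQQ : Q * Q = Q := (hproj (n k)).1
  have hQsa : IsSelfAdjoint Q := (hproj (n k)).2
  clear_value Q
  -- ‖Q‖ ≤ 1
  have hQnorm : ‖Q‖ ≤ 1 := by
    have h := CStarRing.norm_star_mul_self (x := Q)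
    rw [hQsa.star_eq, hQQ] at h
    nlinarith [norm_nonneg Q]
  -- Q kills the finite sums
  have hzero : ∀ F : Finset ℕ, (∀ m ∈ F, m ≠ n k) →
      Q * (∑ m ∈ F, P m) = 0 ∧ (∑ m ∈ F, P m) * Q = 0 := by
    intro F hF
    constructor
    · rw [Finset.mul_sum]
      exact Finset.sum_eq_zero fun m hm => by rw [hQ_def]; exact horth (n k) m (Ne.symm (hF m hm))
    · rw [Finset.sum_mul]
      exact Finset.sum_eq_zero fun m hm => by rw [hQ_def]; exact horth m (n k) (hF m hm)
  have hQAR : Q * AR * Q = 0 := by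
    obtain ⟨h1, h2⟩ := hzero FR (fun m hm => hnk_big m (Finset.mem_union_left _ hm))
    rw [hARe, show Q * ((∑ m ∈ FR, P m) * AR * (∑ m ∈ FR, P m)) * Q
        = (Q * (∑ m ∈ FR, P m)) * AR * ((∑ m ∈ FR, P m) * Q) by noncomm_ring,
      h1, h2, zero_mul, mul_zero]
  have hQAL : Q * AL * Q = 0 := by
    obtain ⟨h1, h2⟩ := hzero FL (fun m hm => hnk_big m (Finset.mem_union_right _ hm))
    rw [hALe, show Q * ((∑ m ∈ FL, P m) * AL * (∑ m ∈ FL, P m)) * Q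
        = (Q * (∑ m ∈ FL, P m)) * AL * ((∑ m ∈ FL, P m) * Q) by noncomm_ring,
      h1, h2, zero_mul, mul_zero]
  -- norm bounds on compressions
  have hcomp : ∀ (Y Z : H →L[ℂ] H), Q * Y * Q = 0 → ‖Z - Y‖ < 1/4 → ‖Q * Z * Q‖ < 1/4 := by
    intro Y Z hY hZY
    have he : Q * Z * Q = Q * (Z - Y) * Q := by
      rw [mul_sub, sub_mul, hY, sub_zero]
    rw [he]
    have b1 := norm_mul_le (Q * (Z - Y)) Q
    have b2 := norm_mul_le Q (Z - Y)
    nlinarith [norm_nonneg Q, norm_nonneg (Z - Y), norm_nonneg (Q * (Z - Y)),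
      norm_nonneg (Q * (Z - Y) * Q)]
  have hQRQ : ‖Q * R * Q‖ < 1/4 := hcomp AR R hQAR hARd
  have hQLQ : ‖Q * L * Q‖ < 1/4 := hcomp AL L hQAL hALd
  -- the scalar difference
  set c : ℂ := (δ : ℂ) - (σ k : ℂ) with hc_def
  clear_value c
  have hcnorm : ‖c‖ * ‖S'‖ < 1/4 := by
    have h1 : ‖c‖ = |δ - σ k| := by
      rw [hc_def, show ((δ:ℂ) - ((σ k : ℝ):ℂ)) = (((δ - σ k : ℝ)) : ℂ) by push_cast; ring,
        Complex.norm_real, Real.norm_eq_abs]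
    have h2 : |δ - σ k| < 1 / (4 * (‖S'‖ + 1)) := by rwa [abs_sub_comm]
    have hS : (0:ℝ) ≤ ‖S'‖ := norm_nonneg _
    have hpos : (0:ℝ) < ‖S'‖ + 1 := by linarith
    have key : (1 / (4 * (‖S'‖ + 1))) * (‖S'‖ + 1) = 1/4 := by
      field_simp
    rw [h1]
    nlinarith [abs_nonneg (δ - σ k), mul_lt_mul_of_pos_right h2 hpos]
  set D : H →L[ℂ] H := T - (σ k : ℂ) • 1 with hD_def
  clear_value D
  have hDQ : D * Q = Q * D := by
    rw [hQ_def, hD_def]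
    simp [sub_mul, mul_sub, hTblock (n k), smul_mul_assoc, mul_smul_comm]
  have hTdQ : Td * Q = Q * Td := by
    rw [hQ_def, hTd_def]
    simp [sub_mul, mul_sub, hTblock (n k), smul_mul_assoc, mul_smul_comm]
  have hDd : D = Td + c • 1 := by
    rw [hD_def, hTd_def, hc_def, sub_smul]
    abel
  set S0 : H →L[ℂ] H := Q * S' * Q with hS0_def
  clear_value S0
  have hQS0 : Q * S0 = S0 := by
    rw [hS0_def, show Q * (Q * S' * Q) = (Q * Q) * S' * Q by noncomm_ring, hQQ]
  have hS0Q : S0 * Q = S0 := by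
    rw [hS0_def, show (Q * S' * Q) * Q = Q * S' * (Q * Q) by noncomm_ring, hQQ]
  have hS0norm : ‖S0‖ ≤ ‖S'‖ := by
    rw [hS0_def]
    calc ‖Q * S' * Q‖ ≤ ‖Q * S'‖ * ‖Q‖ := norm_mul_le _ _
      _ ≤ ‖Q‖ * ‖S'‖ * ‖Q‖ := by gcongr; exact norm_mul_le _ _
      _ ≤ 1 * ‖S'‖ * 1 := by gcongr
      _ = ‖S'‖ := by ring
  have eR' : Td * S0 = Q * R * Q + Q := by
    have h : Q * R * Q = Td * S0 - Q := by
      rw [hR_def, mul_sub, sub_mul, mul_one, hQQ,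
        show Q * (Td * S') * Q = (Q * Td) * S' * Q by noncomm_ring, ← hTdQ,
        show (Td * Q) * S' * Q = Td * (Q * S' * Q) by noncomm_ring, ← hS0_def]
    rw [h]; abel
  have eL' : S0 * Td = Q * L * Q + Q := by
    have h : Q * L * Q = S0 * Td - Q := by
      rw [hL_def, mul_sub, sub_mul, mul_one, hQQ,
        show Q * (S' * Td) * Q = Q * S' * (Td * Q) by noncomm_ring, hTdQ,
        show Q * S' * (Q * Td) = (Q * S' * Q) * Td by noncomm_ring, ← hS0_def]
    rw [h]; abel
  set X : H →L[ℂ] H := D * Q with hX_def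
  clear_value X
  have hXQ : X * Q = X := by rw [hX_def, mul_assoc, hQQ]
  have hQX : Q * X = X := by rw [hDQ, ← mul_assoc, hQQ]
  have hcS0 : ‖c • S0‖ < 1/4 := by
    rw [norm_smul]
    have h3 : ‖c‖ * ‖S0‖ ≤ ‖c‖ * ‖S'‖ := mul_le_mul_of_nonneg_left hS0norm (norm_nonneg c)
    exact lt_of_le_of_lt h3 hcnorm
  have hXS0 : ‖X * S0 - Q‖ < 1 := by
    have e1 : X * S0 = Q * R * Q + Q + c • S0 := by
      rw [hX_def, mul_assoc, hQS0, hDd, add_mul, smul_mul_assoc, one_mul, eR']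
    rw [e1, show Q * R * Q + Q + c • S0 - Q = Q * R * Q + c • S0 from by abel]
    refine lt_of_le_of_lt (norm_add_le _ _) ?_
    exact (add_lt_add hQRQ hcS0).trans (by norm_num)
  have hS0X : ‖S0 * X - Q‖ < 1 := by
    have e1 : S0 * X = Q * L * Q + Q + c • S0 := by
      rw [hDQ, ← mul_assoc, hS0Q, hDd, mul_add, mul_smul_comm, mul_one, eL']
    rw [e1, show Q * L * Q + Q + c • S0 - Q = Q * L * Q + c • S0 from by abel]
    refine lt_of_le_of_lt (norm_add_le _ _) ?_
    exact (add_lt_add hQLQ hcS0).trans (by norm_num)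
  obtain ⟨S, hQS, hSQ, hXS, hSX⟩ :=
    stmt11_corner_inv Q X S0 hQQ hXQ hQX hQS0 hS0Q hXS0 hS0X
  refine hσspec k ⟨S, ?_, ?_, ?_⟩
  · rw [← hQ_def, hQS, hSQ]
  · rw [← hQ_def, ← hD_def]
    calc D * S = D * (Q * S) := by rw [hQS]
      _ = (D * Q) * S := by rw [mul_assoc]
      _ = Q := by rw [← hX_def, hXS]
  · rw [← hQ_def, ← hD_def]
    calc S * D = (S * Q) * D := by rw [hSQ]
      _ = S * (Q * D) := by rw [mul_assoc]
      _ = Q := by rw [← hDQ, hSX]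
end

section
/- Let $A$, $B$, $C$ be commuting bounded self-adjoint operators on a Hilbert space with $B, C \ge 0$, and let $\phi > 0$, $|S| > 0$ be constants. Define $D := |S|\phi - (|S| - B)(\phi - C)$. Suppose $\sigma(B) \subseteq \{0\} \cup [\delta, 2|S| - \delta]$ for some $\delta \in (0, |S|)$, $\sigma(C) \subseteq [0, 2\phi]$, and $\ker B \subseteq \ker C$. Then $D$ vanishes on $\ker B$, and for every $\xi \perp \ker B$, $\langle \xi, D\xi \rangle \ge \delta \phi \|\xi\|^2$; consequently $\sigma(D) \subseteq \{0\} \cup [\delta\phi, \infty)$. -/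
open scoped InnerProductSpace
open Polynomial

private lemma aux_nonneg {H : Type*} [NormedAddCommGroup H] [InnerProductSpace ℂ H]
    [CompleteSpace H] (T : H →L[ℂ] H) (q : ℂ[X]) (hdeg : 0 < q.degree)
    (hsa : IsSelfAdjoint ((aeval T) q))
    (hval : ∀ z ∈ spectrum ℂ T, ∃ r : ℝ, 0 ≤ r ∧ q.eval z = (r : ℂ)) :
    0 ≤ ((aeval T) q : H →L[ℂ] H) := by
  rw [StarOrderedRing.nonneg_iff_spectrum_nonneg (R := ℝ) _ hsa]
  intro x hx
  have hx' : (x : ℂ) ∈ spectrum ℂ ((aeval T) q) := by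
    have := (spectrum.algebraMap_mem_iff (R := ℝ) (S := ℂ)
      (a := ((aeval T) q : H →L[ℂ] H)) (r := x)).mpr hx
    simpa [Complex.coe_algebraMap] using this
  rw [spectrum.map_polynomial_aeval_of_degree_pos T q hdeg] at hx'
  obtain ⟨z, hz, hev⟩ := hx'
  obtain ⟨r, hr, hqr⟩ := hval z hz
  have hev' : eval z q = (x : ℂ) := hev
  have hxr : (x : ℂ) = (r : ℂ) := hev'.symm.trans hqr
  have : x = r := by exact_mod_cast hxr
  exact this ▸ hr

set_option maxHeartbeats 1000000 in
/-- joint spectral estimate. Let `B, C` be commuting bounded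
self-adjoint nonnegative operators on a Hilbert space, `φ, |S| > 0` constants,
and `D := |S|φ - (|S| - B)(φ - C)`. If `σ(B) ⊆ {0} ∪ [δ, 2|S| - δ]` with
`δ ∈ (0, |S|)`, `σ(C) ⊆ [0, 2φ]` and `ker B ⊆ ker C`, then `D` vanishes on
`ker B`, `⟨ξ, Dξ⟩ ≥ δφ‖ξ‖²` for `ξ ⊥ ker B`, and
`σ(D) ⊆ {0} ∪ [δφ, ∞)`. -/
theorem stmt16 {H : Type*} [NormedAddCommGroup H] [InnerProductSpace ℂ H]
    [CompleteSpace H]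
    (B C : H →L[ℂ] H)
    (hBsa : IsSelfAdjoint B) (hCsa : IsSelfAdjoint C)
    (hcomm : B * C = C * B)
    (hBpos : B.IsPositive) (hCpos : C.IsPositive)
    (Scard φ δ : ℝ) (hS : 0 < Scard) (hφ : 0 < φ)
    (hδ : δ ∈ Set.Ioo 0 Scard)
    (hspecB : spectrum ℂ B ⊆
      Complex.ofReal '' ({0} ∪ Set.Icc δ (2 * Scard - δ)))
    (hspecC : spectrum ℂ C ⊆ Complex.ofReal '' Set.Icc 0 (2 * φ))
    (hker : LinearMap.ker (B : H →ₗ[ℂ] H) ≤ LinearMap.ker (C : H →ₗ[ℂ] H)) :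
    (∀ ξ ∈ LinearMap.ker (B : H →ₗ[ℂ] H),
        (((Scard * φ : ℝ) : ℂ) • (1 : H →L[ℂ] H)
          - ((Scard : ℂ) • 1 - B) * ((φ : ℂ) • 1 - C)) ξ = 0) ∧
      (∀ ξ : H, (∀ v ∈ LinearMap.ker (B : H →ₗ[ℂ] H), ⟪ξ, v⟫_ℂ = 0) →
        δ * φ * ‖ξ‖ ^ 2 ≤
          (⟪ξ, (((Scard * φ : ℝ) : ℂ) • (1 : H →L[ℂ] H)
            - ((Scard : ℂ) • 1 - B) * ((φ : ℂ) • 1 - C)) ξ⟫_ℂ).re) ∧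
      spectrum ℂ (((Scard * φ : ℝ) : ℂ) • (1 : H →L[ℂ] H)
          - ((Scard : ℂ) • 1 - B) * ((φ : ℂ) • 1 - C)) ⊆
        Complex.ofReal '' ({0} ∪ Set.Ici (δ * φ)) := by
  obtain ⟨hδ0, hδS⟩ := hδ
  set SB : H →L[ℂ] H := (Scard : ℂ) • 1 - B with hSBdef
  set PC : H →L[ℂ] H := (φ : ℂ) • 1 - C with hPCdef
  set D : H →L[ℂ] H := ((Scard * φ : ℝ) : ℂ) • (1 : H →L[ℂ] H) - SB * PC with hDdef
  have hsmulsa : ∀ r : ℝ, IsSelfAdjoint ((r : ℂ) • (1 : H →L[ℂ] H)) := fun r =>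
    IsSelfAdjoint.smul (by simp [IsSelfAdjoint, Complex.star_def, Complex.conj_ofReal])
      (IsSelfAdjoint.one _)
  have hSBsa : IsSelfAdjoint SB := (hsmulsa Scard).sub hBsa
  have hPCsa : IsSelfAdjoint PC := (hsmulsa φ).sub hCsa
  have hBC : Commute B C := hcomm
  have hSB_PC : Commute SB PC := by
    apply Commute.sub_left
    · exact Commute.smul_left (Commute.one_left PC) _
    · exact Commute.sub_right (Commute.smul_right (Commute.one_right B) _) hBC
  have hSB_B : Commute SB B :=
    Commute.sub_left (Commute.smul_left (Commute.one_left B) _) (Commute.refl B)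
  have hDsa : IsSelfAdjoint D := by
    rw [hDdef]
    refine IsSelfAdjoint.sub (hsmulsa _) ?_
    rw [IsSelfAdjoint, star_mul, hSBsa.star_eq, hPCsa.star_eq]
    exact (hSB_PC.eq).symm
  have symm : ∀ (T : H →L[ℂ] H), IsSelfAdjoint T → ∀ x y : H,
      ⟪T x, y⟫_ℂ = ⟪x, T y⟫_ℂ := fun T hT x y =>
    (ContinuousLinearMap.isSelfAdjoint_iff_isSymmetric.mp hT) x y
  -- Part 1
  have part1 : ∀ ξ ∈ LinearMap.ker (B : H →ₗ[ℂ] H), D ξ = 0 := by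
    intro ξ hξ
    have hB : B ξ = 0 := hξ
    have hC : C ξ = 0 := hker hξ
    rw [hDdef, hSBdef, hPCdef]
    simp only [ContinuousLinearMap.sub_apply, ContinuousLinearMap.smul_apply,
      ContinuousLinearMap.mul_apply, ContinuousLinearMap.one_apply, hB, hC, sub_zero,
      map_smul, smul_smul]
    rw [Complex.ofReal_mul]
    ring_nf
    simp [sub_self]
  -- ‖PC ξ‖ ≤ φ ‖ξ‖ via positivity of φ²•1 - PC²
  have haev2 : (aeval C) (Polynomial.C ((φ ^ 2 : ℝ) : ℂ) - (Polynomial.C (φ : ℂ) - X) ^ 2)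
      = ((φ ^ 2 : ℝ) : ℂ) • (1 : H →L[ℂ] H) - PC ^ 2 := by
    simp only [map_sub, map_pow, aeval_C, aeval_X, Algebra.algebraMap_eq_smul_one, hPCdef]
  have hP2sa : IsSelfAdjoint (((φ ^ 2 : ℝ) : ℂ) • (1 : H →L[ℂ] H) - PC ^ 2) :=
    (hsmulsa _).sub (hPCsa.pow 2)
  have hP2nn : 0 ≤ ((φ ^ 2 : ℝ) : ℂ) • (1 : H →L[ℂ] H) - PC ^ 2 := by
    rw [← haev2]
    refine aux_nonneg C _ ?_ (by rw [haev2]; exact hP2sa) ?_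
    · have h2 : (Polynomial.C ((φ ^ 2 : ℝ) : ℂ) - (Polynomial.C (φ : ℂ) - X) ^ 2).degree = 2 := by
        compute_degree!
      rw [h2]; decide
    · intro z hz
      obtain ⟨c, hc, rfl⟩ := hspecC hz
      obtain ⟨hc0, hc2⟩ := hc
      refine ⟨φ ^ 2 - (φ - c) ^ 2, by nlinarith, ?_⟩
      simp only [eval_sub, eval_pow, eval_C, eval_X]
      push_cast
      ring_nf
      try rfl
  have hP2pos := (ContinuousLinearMap.nonneg_iff_isPositive _).mp hP2nn
  have hPCnorm : ∀ ξ : H, ‖PC ξ‖ ≤ φ * ‖ξ‖ := by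
    intro ξ
    have h0 := hP2pos.inner_nonneg_right ξ
    have happ : (((φ ^ 2 : ℝ) : ℂ) • (1 : H →L[ℂ] H) - PC ^ 2) ξ
        = ((φ ^ 2 : ℝ) : ℂ) • ξ - PC (PC ξ) := by
      simp [ContinuousLinearMap.sub_apply, ContinuousLinearMap.smul_apply, pow_two,
        ContinuousLinearMap.mul_apply]
    have hexp : (⟪ξ, (((φ ^ 2 : ℝ) : ℂ) • (1 : H →L[ℂ] H) - PC ^ 2) ξ⟫_ℂ)
        = ((φ ^ 2 * ‖ξ‖ ^ 2 - ‖PC ξ‖ ^ 2 : ℝ) : ℂ) := by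
      rw [happ, inner_sub_right, inner_smul_right, ← symm PC hPCsa ξ (PC ξ),
        inner_self_eq_norm_sq_to_K, inner_self_eq_norm_sq_to_K]
      push_cast
      ring_nf
      try rfl
    rw [hexp, Complex.zero_le_real] at h0
    have hsq : ‖PC ξ‖ ^ 2 ≤ (φ * ‖ξ‖) ^ 2 := by nlinarith
    exact (pow_le_pow_iff_left₀ (norm_nonneg _) (by positivity) two_ne_zero).mp hsq
  -- ‖SB (B η)‖ ≤ (Scard - δ) ‖B η‖ via positivity of ((S-δ)²•1 - SB²) * B²
  have haev1 : (aeval B) ((Polynomial.C (((Scard - δ) ^ 2 : ℝ) : ℂ)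
        - (Polynomial.C (Scard : ℂ) - X) ^ 2) * X ^ 2)
      = ((((Scard - δ) ^ 2 : ℝ) : ℂ) • (1 : H →L[ℂ] H) - SB ^ 2) * B ^ 2 := by
    simp only [map_mul, map_sub, map_pow, aeval_C, aeval_X, Algebra.algebraMap_eq_smul_one,
      hSBdef]
  have hX1sa : IsSelfAdjoint ((((Scard - δ) ^ 2 : ℝ) : ℂ) • (1 : H →L[ℂ] H) - SB ^ 2) :=
    (hsmulsa _).sub (hSBsa.pow 2)
  have hX1_B2 : Commute ((((Scard - δ) ^ 2 : ℝ) : ℂ) • (1 : H →L[ℂ] H) - SB ^ 2) (B ^ 2) := by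
    apply Commute.sub_left
    · exact Commute.smul_left (Commute.one_left _) _
    · exact hSB_B.pow_pow 2 2
  have hP1sa : IsSelfAdjoint
      (((((Scard - δ) ^ 2 : ℝ) : ℂ) • (1 : H →L[ℂ] H) - SB ^ 2) * B ^ 2) := by
    rw [IsSelfAdjoint, star_mul, hX1sa.star_eq, (hBsa.pow 2).star_eq]
    exact (hX1_B2.eq).symm
  have hP1nn : 0 ≤ ((((Scard - δ) ^ 2 : ℝ) : ℂ) • (1 : H →L[ℂ] H) - SB ^ 2) * B ^ 2 := by
    rw [← haev1]
    refine aux_nonneg B _ ?_ (by rw [haev1]; exact hP1sa) ?_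
    · have h4 : ((Polynomial.C (((Scard - δ) ^ 2 : ℝ) : ℂ)
          - (Polynomial.C (Scard : ℂ) - X) ^ 2) * X ^ 2).degree = 4 := by
        compute_degree!
      rw [h4]; decide
    · intro z hz
      obtain ⟨b, hb, rfl⟩ := hspecB hz
      refine ⟨((Scard - δ) ^ 2 - (Scard - b) ^ 2) * b ^ 2, ?_, ?_⟩
      · rcases hb with hb | hb
        · rw [Set.mem_singleton_iff] at hb
          subst hb
          exact le_of_eq (by ring)
        · obtain ⟨hb1, hb2⟩ := hb
          nlinarith [sq_nonneg b, mul_nonneg (sub_nonneg.mpr hb1) (sub_nonneg.mpr hb2)]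
      · simp only [eval_mul, eval_sub, eval_pow, eval_C, eval_X]
        push_cast
        ring_nf
        try rfl
  have hP1pos := (ContinuousLinearMap.nonneg_iff_isPositive _).mp hP1nn
  have hSBBsa : IsSelfAdjoint (SB * B) := by
    rw [IsSelfAdjoint, star_mul, hSBsa.star_eq, hBsa.star_eq]
    exact (hSB_B.eq).symm
  have hSBBnorm : ∀ η : H, ‖SB (B η)‖ ≤ (Scard - δ) * ‖B η‖ := by
    intro η
    have h0 := hP1pos.inner_nonneg_right η
    have hrw : ((((Scard - δ) ^ 2 : ℝ) : ℂ) • (1 : H →L[ℂ] H) - SB ^ 2) * B ^ 2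
        = (((Scard - δ) ^ 2 : ℝ) : ℂ) • (B * B) - (SB * B) * (SB * B) := by
      rw [sub_mul, smul_mul_assoc, one_mul, ← hSB_B.mul_pow]
      rw [show (B : H →L[ℂ] H) ^ 2 = B * B from pow_two B,
        show (SB * B) ^ 2 = (SB * B) * (SB * B) from pow_two _]
    have happ : (((((Scard - δ) ^ 2 : ℝ) : ℂ) • (1 : H →L[ℂ] H) - SB ^ 2) * B ^ 2) η
        = (((Scard - δ) ^ 2 : ℝ) : ℂ) • (B (B η)) - (SB * B) ((SB * B) η) := by
      rw [hrw]
      simp [ContinuousLinearMap.sub_apply, ContinuousLinearMap.smul_apply,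
        ContinuousLinearMap.mul_apply]
    have hexp : ⟪η, (((((Scard - δ) ^ 2 : ℝ) : ℂ) • (1 : H →L[ℂ] H) - SB ^ 2) * B ^ 2) η⟫_ℂ
        = (((Scard - δ) ^ 2 * ‖B η‖ ^ 2 - ‖SB (B η)‖ ^ 2 : ℝ) : ℂ) := by
      rw [happ, inner_sub_right, inner_smul_right]
      have e1 : ⟪η, B (B η)⟫_ℂ = ((‖B η‖ : ℂ)) ^ 2 := by
        rw [← symm B hBsa η (B η), inner_self_eq_norm_sq_to_K]
        rfl
      have e2 : ⟪η, (SB * B) ((SB * B) η)⟫_ℂ = ((‖SB (B η)‖ : ℂ)) ^ 2 := by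
        rw [← symm (SB * B) hSBBsa η ((SB * B) η)]
        simp only [ContinuousLinearMap.mul_apply]
        rw [inner_self_eq_norm_sq_to_K]
        rfl
      rw [e1, e2]
      push_cast
      ring_nf
      try rfl
    rw [hexp, Complex.zero_le_real] at h0
    have hsq : ‖SB (B η)‖ ^ 2 ≤ ((Scard - δ) * ‖B η‖) ^ 2 := by nlinarith
    exact (pow_le_pow_iff_left₀ (norm_nonneg _)
      (mul_nonneg (by linarith) (norm_nonneg _)) two_ne_zero).mp hsq
  -- inner product expansion of D
  have hDinner : ∀ ξ : H, ⟪ξ, D ξ⟫_ℂ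
      = ((Scard * φ * ‖ξ‖ ^ 2 : ℝ) : ℂ) - ⟪SB ξ, PC ξ⟫_ℂ := by
    intro ξ
    have happ : D ξ = ((Scard * φ : ℝ) : ℂ) • ξ - SB (PC ξ) := by
      rw [hDdef]
      simp [ContinuousLinearMap.sub_apply, ContinuousLinearMap.smul_apply,
        ContinuousLinearMap.mul_apply]
    rw [happ, inner_sub_right, inner_smul_right, ← symm SB hSBsa ξ (PC ξ),
      inner_self_eq_norm_sq_to_K]
    congr 1
    push_cast
    ring_nf
    try rfl
  -- Part 2
  have part2 : ∀ ξ : H, (∀ v ∈ LinearMap.ker (B : H →ₗ[ℂ] H), ⟪ξ, v⟫_ℂ = 0) →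
      δ * φ * ‖ξ‖ ^ 2 ≤ (⟪ξ, D ξ⟫_ℂ).re := by
    intro ξ hξ
    have hξmem : ξ ∈ (LinearMap.ker (B : H →ₗ[ℂ] H) : Submodule ℂ H)ᗮ := by
      rw [Submodule.mem_orthogonal]
      intro u hu
      have := hξ u hu
      rw [← inner_conj_symm, this, map_zero]
    have hkerort : (LinearMap.ker (B : H →ₗ[ℂ] H) : Submodule ℂ H) = (LinearMap.range (B : H →ₗ[ℂ] H))ᗮ := by
      ext v
      constructor
      · intro hv
        rw [Submodule.mem_orthogonal]
        rintro u ⟨w, rfl⟩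
        rw [ContinuousLinearMap.coe_coe, symm B hBsa w v]
        have hv' : B v = 0 := hv
        rw [hv', inner_zero_right]
      · intro hv
        have h1 : ⟪B v, B v⟫_ℂ = 0 := by
          rw [symm B hBsa v (B v)]
          exact (Submodule.mem_orthogonal' _ _).mp hv (B (B v)) ⟨B v, rfl⟩
        exact inner_self_eq_zero.mp h1
    have hclos : ξ ∈ closure ((LinearMap.range (B : H →ₗ[ℂ] H) : Submodule ℂ H) : Set H) := by
      have h2 : (LinearMap.ker (B : H →ₗ[ℂ] H) : Submodule ℂ H)ᗮ
          = (LinearMap.range (B : H →ₗ[ℂ] H) : Submodule ℂ H).topologicalClosure := by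
        rw [hkerort, Submodule.orthogonal_orthogonal_eq_closure]
      rw [h2] at hξmem
      exact hξmem
    have hcont : Continuous fun ζ : H => (⟪ζ, D ζ⟫_ℂ).re - δ * φ * ‖ζ‖ ^ 2 := by
      apply Continuous.sub
      · exact Complex.continuous_re.comp (Continuous.inner continuous_id D.continuous)
      · exact continuous_const.mul (continuous_norm.pow 2)
    have hclosed : IsClosed {ζ : H | 0 ≤ (⟪ζ, D ζ⟫_ℂ).re - δ * φ * ‖ζ‖ ^ 2} :=
      isClosed_le continuous_const hcont
    have hsub : ((LinearMap.range (B : H →ₗ[ℂ] H) : Submodule ℂ H) : Set H)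
        ⊆ {ζ : H | 0 ≤ (⟪ζ, D ζ⟫_ℂ).re - δ * φ * ‖ζ‖ ^ 2} := by
      rintro ζ ⟨η, rfl⟩
      have h1 : (⟪SB (B η), PC (B η)⟫_ℂ).re ≤ (Scard - δ) * φ * ‖B η‖ ^ 2 := by
        calc (⟪SB (B η), PC (B η)⟫_ℂ).re ≤ ‖⟪SB (B η), PC (B η)⟫_ℂ‖ :=
              Complex.re_le_norm _
          _ = ‖⟪SB (B η), PC (B η)⟫_ℂ‖ := rfl
          _ ≤ ‖SB (B η)‖ * ‖PC (B η)‖ := norm_inner_le_norm _ _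
          _ ≤ ((Scard - δ) * ‖B η‖) * (φ * ‖B η‖) := by
              exact mul_le_mul (hSBBnorm η) (hPCnorm (B η)) (norm_nonneg _)
                (mul_nonneg (by linarith) (norm_nonneg _))
          _ = (Scard - δ) * φ * ‖B η‖ ^ 2 := by ring
      have h2 := hDinner (B η)
      have h3 : (⟪B η, D (B η)⟫_ℂ).re
          = Scard * φ * ‖B η‖ ^ 2 - (⟪SB (B η), PC (B η)⟫_ℂ).re := by
        rw [h2, Complex.sub_re, Complex.ofReal_re]
      simp only [Set.mem_setOf_eq]
      rw [ContinuousLinearMap.coe_coe, h3]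
      nlinarith [norm_nonneg (B η), sq_nonneg ‖B η‖]
    have hfin := closure_minimal hsub hclosed hclos
    simp only [Set.mem_setOf_eq] at hfin
    linarith
  -- orthogonal decomposition: key quadratic form facts for arbitrary ξ
  haveI : CompleteSpace (LinearMap.ker (B : H →ₗ[ℂ] H) : Submodule ℂ H) :=
    (ContinuousLinearMap.isClosed_ker B).completeSpace_coe
  have hkey : ∀ ξ : H, ∃ ξ1 : H, D ξ = D ξ1 ∧ ⟪ξ, D ξ⟫_ℂ = ⟪ξ1, D ξ1⟫_ℂ ∧
      δ * φ * ‖ξ1‖ ^ 2 ≤ (⟪ξ1, D ξ1⟫_ℂ).re := by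
    intro ξ
    obtain ⟨ξ0, hξ0, ξ1, hξ1, rfl⟩ :=
      Submodule.exists_add_mem_mem_orthogonal (K := (LinearMap.ker (B : H →ₗ[ℂ] H) : Submodule ℂ H)) ξ
    have hD0 : D ξ0 = 0 := part1 ξ0 hξ0
    have hDadd : D (ξ0 + ξ1) = D ξ1 := by rw [map_add, hD0, zero_add]
    have hperp : ∀ v ∈ LinearMap.ker (B : H →ₗ[ℂ] H), ⟪ξ1, v⟫_ℂ = 0 := fun v hv =>
      (Submodule.mem_orthogonal' _ _).mp hξ1 v hv
    refine ⟨ξ1, hDadd, ?_, part2 ξ1 hperp⟩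
    rw [hDadd, inner_add_left]
    have hcross : ⟪ξ0, D ξ1⟫_ℂ = 0 := by
      rw [← symm D hDsa ξ0 ξ1, hD0, inner_zero_left]
    rw [hcross, zero_add]
  -- D is positive
  have hDpos : D.IsPositive := by
    refine ⟨ContinuousLinearMap.isSelfAdjoint_iff_isSymmetric.mp hDsa, fun ξ => ?_⟩
    rw [ContinuousLinearMap.reApplyInnerSelf_apply, inner_re_symm, RCLike.re_to_complex]
    obtain ⟨ξ1, _, heq, hge⟩ := hkey ξ
    rw [heq]
    exact le_trans (mul_nonneg (mul_nonneg hδ0.le hφ.le) (sq_nonneg _)) hge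
  have hDnn : 0 ≤ D := (ContinuousLinearMap.nonneg_iff_isPositive D).mpr hDpos
  -- E := D*D - δφ•D is positive
  set E : H →L[ℂ] H := D * D - ((δ * φ : ℝ) : ℂ) • D with hEdef
  have hEsa : IsSelfAdjoint E := by
    rw [hEdef, IsSelfAdjoint, star_sub, star_mul, hDsa.star_eq, star_smul, hDsa.star_eq]
    simp [Complex.star_def, Complex.conj_ofReal]
  have hEpos : E.IsPositive := by
    refine ⟨ContinuousLinearMap.isSelfAdjoint_iff_isSymmetric.mp hEsa, fun ξ => ?_⟩
    rw [ContinuousLinearMap.reApplyInnerSelf_apply, inner_re_symm, RCLike.re_to_complex]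
    obtain ⟨ξ1, hDξ, heq, hge⟩ := hkey ξ
    have happ : E ξ = D (D ξ) - ((δ * φ : ℝ) : ℂ) • (D ξ) := by
      rw [hEdef]
      simp [ContinuousLinearMap.sub_apply, ContinuousLinearMap.smul_apply,
        ContinuousLinearMap.mul_apply]
    have h1 : ⟪ξ, E ξ⟫_ℂ = ((‖D ξ1‖ ^ 2 : ℝ) : ℂ) - ((δ * φ : ℝ) : ℂ) * ⟪ξ1, D ξ1⟫_ℂ := by
      rw [happ, inner_sub_right, inner_smul_right, ← symm D hDsa ξ (D ξ), heq, hDξ,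
        inner_self_eq_norm_sq_to_K]
      push_cast
      ring_nf
      try rfl
      try rw [sub_eq_neg_add]
      try rfl
    rw [h1]
    set t := (⟪ξ1, D ξ1⟫_ℂ).re with htdef
    have ht0 : 0 ≤ t := le_trans (mul_nonneg (mul_nonneg hδ0.le hφ.le) (sq_nonneg _)) hge
    have hre : (((‖D ξ1‖ ^ 2 : ℝ) : ℂ) - ((δ * φ : ℝ) : ℂ) * ⟪ξ1, D ξ1⟫_ℂ).re
        = ‖D ξ1‖ ^ 2 - δ * φ * t := by
      simp only [Complex.sub_re, Complex.mul_re, Complex.ofReal_re, Complex.ofReal_im,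
        zero_mul, sub_zero, htdef]
    rw [hre]
    have hCS : t ≤ ‖ξ1‖ * ‖D ξ1‖ := by
      calc t ≤ ‖⟪ξ1, D ξ1⟫_ℂ‖ := Complex.re_le_norm _
        _ = ‖⟪ξ1, D ξ1⟫_ℂ‖ := rfl
        _ ≤ ‖ξ1‖ * ‖D ξ1‖ := norm_inner_le_norm _ _
    by_cases hz : ξ1 = 0
    · have : D ξ1 = 0 := by rw [hz, map_zero]
      rw [this]
      have ht0' : t = 0 := le_antisymm (by simpa [hz] using hCS) ht0
      simp [ht0']
    · have hn : 0 < ‖ξ1‖ := norm_pos_iff.mpr hz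
      nlinarith [mul_self_le_mul_self ht0 hCS, hge, mul_pos hn hn,
        mul_nonneg (mul_nonneg hδ0.le hφ.le) ht0]
  have hEnn : 0 ≤ E := (ContinuousLinearMap.nonneg_iff_isPositive E).mpr hEpos
  -- Part 3
  have part3 : spectrum ℂ D ⊆ Complex.ofReal '' ({0} ∪ Set.Ici (δ * φ)) := by
    intro μ hμ
    have hμr : μ = ((μ.re : ℝ) : ℂ) := hDsa.mem_spectrum_eq_re hμ
    set r : ℝ := μ.re with hrdef
    have hrD : r ∈ spectrum ℝ D := by
      refine (spectrum.algebraMap_mem_iff ℂ).mp ?_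
      have h5 : ((r : ℝ) : ℂ) ∈ spectrum ℂ D := by rw [← hμr]; exact hμ
      simpa [Complex.coe_algebraMap] using h5
    have hr0 : 0 ≤ r := spectrum_nonneg_of_nonneg hDnn hrD
    have haevE : (aeval D) (X ^ 2 - Polynomial.C ((δ * φ : ℝ) : ℂ) * X) = E := by
      rw [hEdef]
      simp only [map_sub, map_mul, map_pow, aeval_X, aeval_C, Algebra.algebraMap_eq_smul_one]
      rw [pow_two, smul_mul_assoc, one_mul]
    have hq3 : ((r ^ 2 - δ * φ * r : ℝ) : ℂ) ∈ spectrum ℂ E := by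
      refine haevE ▸ spectrum.subset_polynomial_aeval D _ ⟨μ, hμ, ?_⟩
      simp only [eval_sub, eval_mul, eval_pow, eval_C, eval_X]
      rw [hμr]
      push_cast
      ring
    have hval0 : 0 ≤ r ^ 2 - δ * φ * r := by
      refine spectrum_nonneg_of_nonneg hEnn ?_
      refine (spectrum.algebraMap_mem_iff ℂ).mp ?_
      simpa [Complex.coe_algebraMap] using hq3
    refine ⟨r, ?_, hμr.symm⟩
    by_cases hr : r = 0
    · exact Or.inl (by simp [hr])
    · refine Or.inr ?_
      have hrpos : 0 < r := lt_of_le_of_ne hr0 (Ne.symm hr)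
      rw [Set.mem_Ici]
      nlinarith
  exact ⟨part1, part2, part3⟩
end
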